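/- Balance of mass and energy (Lemma 3.2): Let (ρ_e, m_e)_{e∈E} be a smooth solution on [0,T]. Then for every t ∈ [0,T], the total mass M(t) is differentiable with d/dt M(t) = 0, and the total energy E(t) is differentiable with d/dt E(t) + D(t) = 0. -/

import Mathlib

open MeasureTheory intervalIntegral Set

namespace PipeAux

lemma slice_t {f : ℝ → ℝ → ℝ} {T L : ℝ}
    (h : ContinuousOn (fun q : ℝ × ℝ => f q.1 q.2) (Set.Icc 0 T ×ˢ Set.Icc 0 L))
    {s : ℝ} (hs : s ∈ Set.Icc 0 T) : ContinuousOn (fun x => f s x) (Set.Icc 0 L) :=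
  h.comp (Continuous.continuousOn (by fun_prop)) (fun x hx => Set.mk_mem_prod hs hx)

lemma slice_x {f : ℝ → ℝ → ℝ} {T L : ℝ}
    (h : ContinuousOn (fun q : ℝ × ℝ => f q.1 q.2) (Set.Icc 0 T ×ˢ Set.Icc 0 L))
    {x : ℝ} (hx : x ∈ Set.Icc 0 L) : ContinuousOn (fun s => f s x) (Set.Icc 0 T) :=
  h.comp (Continuous.continuousOn (by fun_prop)) (fun s hs => Set.mk_mem_prod hs hx)

/-- Continuity of the parametric integral. -/
lemma contOn_param_integral {T L : ℝ} (hL : 0 ≤ L) {ft : ℝ → ℝ → ℝ}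
    (hcont : ContinuousOn (fun q : ℝ × ℝ => ft q.1 q.2) (Set.Icc 0 T ×ˢ Set.Icc 0 L)) :
    ContinuousOn (fun s => ∫ x in (0:ℝ)..L, ft s x) (Set.Icc 0 T) := by
  obtain ⟨C, hC⟩ : ∃ C, ∀ q ∈ Set.Icc (0:ℝ) T ×ˢ Set.Icc (0:ℝ) L, ‖ft q.1 q.2‖ ≤ C :=
    (isCompact_Icc.prod isCompact_Icc).exists_bound_of_continuousOn hcont
  intro s₀ hs₀
  have hIoc : Set.uIoc (0:ℝ) L ⊆ Set.Icc 0 L := by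
    rw [Set.uIoc_of_le hL]; exact Set.Ioc_subset_Icc_self
  refine continuousWithinAt_of_dominated_interval ?_ ?_ (_root_.intervalIntegrable_const (c := C)) ?_
  · filter_upwards [self_mem_nhdsWithin] with s hs
    exact ((slice_t hcont hs).mono hIoc).aestronglyMeasurable
      (by rw [Set.uIoc_of_le hL]; exact measurableSet_Ioc)
  · filter_upwards [self_mem_nhdsWithin] with s hs
    exact Filter.Eventually.of_forall fun x hx => hC (s, x) ⟨hs, hIoc hx⟩
  · exact Filter.Eventually.of_forall fun x hx => (slice_x hcont (hIoc hx)) s₀ hs₀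

/-- Differentiation under the integral sign, within `Icc 0 T`, via Fubini + FTC. -/
lemma param_hasDerivWithinAt {T L : ℝ} (hL : 0 ≤ L)
    {f ft : ℝ → ℝ → ℝ}
    (hderiv : ∀ t ∈ Set.Icc 0 T, ∀ x ∈ Set.Icc 0 L, HasDerivAt (fun s => f s x) (ft t x) t)
    (hfc : ∀ s ∈ Set.Icc 0 T, ContinuousOn (fun x => f s x) (Set.Icc 0 L))
    (hcont : ContinuousOn (fun q : ℝ × ℝ => ft q.1 q.2) (Set.Icc 0 T ×ˢ Set.Icc 0 L))
    {t : ℝ} (ht : t ∈ Set.Icc 0 T) :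
    HasDerivWithinAt (fun s => ∫ x in (0:ℝ)..L, f s x) (∫ x in (0:ℝ)..L, ft t x)
      (Set.Icc 0 T) t := by
  have hT : (0:ℝ) ≤ T := le_trans ht.1 ht.2
  set h : ℝ → ℝ := fun s => ∫ x in (0:ℝ)..L, ft s x with hh
  have hcontH : ContinuousOn h (Set.Icc 0 T) := contOn_param_integral hL hcont
  have key : ∀ s ∈ Set.Icc (0:ℝ) T,
      (∫ x in (0:ℝ)..L, f s x) = (∫ x in (0:ℝ)..L, f 0 x) + ∫ u in (0:ℝ)..s, h u := by
    intro s hs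
    have h0T : (0:ℝ) ∈ Set.Icc (0:ℝ) T := ⟨le_refl _, hT⟩
    have hIccs : Set.Icc (0:ℝ) s ⊆ Set.Icc 0 T := Set.Icc_subset_Icc le_rfl hs.2
    have ptw : ∀ x ∈ Set.Icc (0:ℝ) L,
        (∫ u in (0:ℝ)..s, ft u x) = f s x - f 0 x := by
      intro x hx
      refine intervalIntegral.integral_eq_sub_of_hasDerivAt
        (f := fun u => f u x) (f' := fun u => ft u x) (fun u hu => ?_) ?_
      · exact hderiv u (hIccs (by rwa [Set.uIcc_of_le hs.1] at hu)) x hx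
      · exact ContinuousOn.intervalIntegrable
          (by rw [Set.uIcc_of_le hs.1]; exact (slice_x hcont hx).mono hIccs)
    have fub : (∫ x in (0:ℝ)..L, ∫ u in (0:ℝ)..s, ft u x) = ∫ u in (0:ℝ)..s, h u := by
      rw [intervalIntegral.integral_of_le hL, intervalIntegral.integral_of_le hs.1]
      simp only [hh, intervalIntegral.integral_of_le hs.1, intervalIntegral.integral_of_le hL]
      have hint : Integrable (Function.uncurry fun x u => ft u x)
          ((volume.restrict (Set.Ioc (0:ℝ) L)).prod (volume.restrict (Set.Ioc (0:ℝ) s))) := by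
        rw [Measure.prod_restrict]
        have hc2 : ContinuousOn (Function.uncurry fun x u => ft u x)
            (Set.Icc (0:ℝ) L ×ˢ Set.Icc (0:ℝ) s) := by
          have h2 : ContinuousOn (fun q : ℝ × ℝ => ft q.1 q.2)
              (Set.Icc 0 T ×ˢ Set.Icc 0 L) := hcont
          exact h2.comp (Continuous.continuousOn (by fun_prop))
            (fun q hq => Set.mk_mem_prod (hIccs hq.2) hq.1)
        rw [← Measure.volume_eq_prod]
        have := hc2.integrableOn_compact (μ := volume) (isCompact_Icc.prod isCompact_Icc)
        exact this.mono_set (Set.prod_mono Set.Ioc_subset_Icc_self Set.Ioc_subset_Icc_self)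
      simpa using MeasureTheory.integral_integral_swap hint
    have hsub : (∫ x in (0:ℝ)..L, ∫ u in (0:ℝ)..s, ft u x)
        = (∫ x in (0:ℝ)..L, f s x) - (∫ x in (0:ℝ)..L, f 0 x) := by
      rw [← intervalIntegral.integral_sub
        (ContinuousOn.intervalIntegrable (by rw [Set.uIcc_of_le hL]; exact hfc s hs))
        (ContinuousOn.intervalIntegrable (by rw [Set.uIcc_of_le hL]; exact hfc 0 h0T))]
      refine intervalIntegral.integral_congr fun x hx => ?_
      exact ptw x (by rwa [Set.uIcc_of_le hL] at hx)
    linarith [fub, hsub]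
  haveI : Fact (t ∈ Set.Icc (0:ℝ) T) := ⟨ht⟩
  have hG : HasDerivWithinAt (fun s => ∫ u in (0:ℝ)..s, h u) (h t) (Set.Icc 0 T) t := by
    refine intervalIntegral.integral_hasDerivWithinAt_right ?_ ?_ (hcontH t ht)
    · exact ContinuousOn.intervalIntegrable
        (by rw [Set.uIcc_of_le ht.1]; exact hcontH.mono (Set.Icc_subset_Icc le_rfl ht.2))
    · exact ⟨Set.Icc 0 T, self_mem_nhdsWithin, hcontH.aestronglyMeasurable measurableSet_Icc⟩
  have hsum : HasDerivWithinAt (fun s => (∫ x in (0:ℝ)..L, f 0 x) + ∫ u in (0:ℝ)..s, h u)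
      (h t) (Set.Icc 0 T) t := hG.const_add _
  exact hsum.congr (fun s hs => key s hs) (key t ht)

lemma sum_sub_eq_sum_vertices {V E : Type} [Fintype V] [Fintype E] [DecidableEq V]
    (src dst : E → V) (φ ψ : E → ℝ) :
    ∑ e, (φ e - ψ e)
      = ∑ w, ∑ e, ((if dst e = w then φ e else 0) - (if src e = w then ψ e else 0)) := by
  rw [Finset.sum_comm]
  refine Finset.sum_congr rfl fun e _ => ?_
  rw [Finset.sum_sub_distrib]
  simp

end PipeAux

/-- A *smooth solution* of the compressible flow problem on the pipe network
determined by `src`, `dst`, `ℓ` on the time interval `[0, T]`, with adiabatic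
exponent `γ`, viscosity coefficients `a`, friction coefficients `b` and pressure
coefficients `c`.  The fluid state on edge `e` is given by the density `ρ e t x`
and the mass flux `m e t x`; the functions `ρt, ρx, mt, mx, mxx` are the
corresponding partial derivatives.  The pressure law is `p_e(ρ) = c e * ρ ^ γ`,
with potential energy density `P_e(ρ) = c e * ρ ^ γ / (γ - 1)` and
`P_e'(ρ) = c e * γ / (γ - 1) * ρ ^ (γ - 1)`.  A vertex `w` is interior if at least
two edges are incident, and a function `f_e` is evaluated at the vertex `src e`
as `f e t 0` and at `dst e` as `f e t (ℓ e)`. -/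
def SmoothSolution {V E : Type} [Fintype V] [Fintype E] [DecidableEq V]
    (src dst : E → V) (ℓ : E → ℝ) (γ : ℝ) (a b c : E → ℝ) (T : ℝ)
    (ρ m ρt ρx mt mx mxx : E → ℝ → ℝ → ℝ) : Prop :=
  -- uniform positivity of the density
  (∃ ρlow > (0 : ℝ), ∀ e, ∀ t ∈ Set.Icc 0 T, ∀ x ∈ Set.Icc 0 (ℓ e), ρlow ≤ ρ e t x) ∧
  -- ρ and m are continuously differentiable, and ∂ₓ m is continuously differentiable in x
  (∀ e, ∀ t ∈ Set.Icc 0 T, ∀ x ∈ Set.Icc 0 (ℓ e),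
      HasDerivAt (fun s => ρ e s x) (ρt e t x) t ∧
      HasDerivAt (fun y => ρ e t y) (ρx e t x) x ∧
      HasDerivAt (fun s => m e s x) (mt e t x) t ∧
      HasDerivAt (fun y => m e t y) (mx e t x) x ∧
      HasDerivAt (fun y => mx e t y) (mxx e t x) x) ∧
  (∀ e, ContinuousOn (fun q : ℝ × ℝ => ρ e q.1 q.2) (Set.Icc 0 T ×ˢ Set.Icc 0 (ℓ e))) ∧
  (∀ e, ContinuousOn (fun q : ℝ × ℝ => m e q.1 q.2) (Set.Icc 0 T ×ˢ Set.Icc 0 (ℓ e))) ∧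
  (∀ e, ContinuousOn (fun q : ℝ × ℝ => ρt e q.1 q.2) (Set.Icc 0 T ×ˢ Set.Icc 0 (ℓ e))) ∧
  (∀ e, ContinuousOn (fun q : ℝ × ℝ => ρx e q.1 q.2) (Set.Icc 0 T ×ˢ Set.Icc 0 (ℓ e))) ∧
  (∀ e, ContinuousOn (fun q : ℝ × ℝ => mt e q.1 q.2) (Set.Icc 0 T ×ˢ Set.Icc 0 (ℓ e))) ∧
  (∀ e, ContinuousOn (fun q : ℝ × ℝ => mx e q.1 q.2) (Set.Icc 0 T ×ˢ Set.Icc 0 (ℓ e))) ∧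
  (∀ e, ∀ t ∈ Set.Icc 0 T, ContinuousOn (fun y => mxx e t y) (Set.Icc 0 (ℓ e))) ∧
  -- (i) conservation of mass:  ∂ₜ ρ + ∂ₓ m = 0
  (∀ e, ∀ t ∈ Set.Icc 0 T, ∀ x ∈ Set.Icc 0 (ℓ e), ρt e t x + mx e t x = 0) ∧
  -- (ii) balance of momentum:
  --   ∂ₜ m + ∂ₓ (m²/ρ + p(ρ)) = a ρ ∂ₓ (ρ⁻² ∂ₓ m) - b |m| m / ρ
  (∀ e, ∀ t ∈ Set.Icc 0 T, ∀ x ∈ Set.Icc 0 (ℓ e), ∃ F G : ℝ,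
      HasDerivAt (fun y => m e t y ^ 2 / ρ e t y + c e * ρ e t y ^ γ) F x ∧
      HasDerivAt (fun y => mx e t y / ρ e t y ^ 2) G x ∧
      mt e t x + F = a e * ρ e t x * G - b e * |m e t x| * m e t x / ρ e t x) ∧
  -- (iii) coupling conditions at interior vertices
  (∀ w : V, 2 ≤ (Finset.univ.filter fun e : E => src e = w ∨ dst e = w).card →
    ∀ t ∈ Set.Icc 0 T,
      ((∑ e : E, ((if dst e = w then m e t (ℓ e) else 0)
          - (if src e = w then m e t 0 else 0))) = 0) ∧
      (∃ h : ℝ, ∀ e : E,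
        (src e = w →
          m e t 0 ^ 2 / (2 * ρ e t 0 ^ 2) + c e * γ / (γ - 1) * ρ e t 0 ^ (γ - 1)
            - a e / ρ e t 0 ^ 2 * mx e t 0 = h) ∧
        (dst e = w →
          m e t (ℓ e) ^ 2 / (2 * ρ e t (ℓ e) ^ 2)
            + c e * γ / (γ - 1) * ρ e t (ℓ e) ^ (γ - 1)
            - a e / ρ e t (ℓ e) ^ 2 * mx e t (ℓ e) = h))) ∧
  -- (iv) no-flux boundary condition at boundary vertices
  (∀ w : V, (Finset.univ.filter fun e : E => src e = w ∨ dst e = w).card < 2 →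
    ∀ t ∈ Set.Icc 0 T, ∀ e : E,
      (src e = w → m e t 0 = 0) ∧ (dst e = w → m e t (ℓ e) = 0))

/-- **Balance of mass and energy (Lemma 3.2).**  Let `(ρ, m)` be a smooth solution
on `[0,T]`.  Then for every `t ∈ [0,T]` the total mass
`M(t) = Σ_e ∫_0^{ℓ_e} ρ_e(t,x) dx` is differentiable with `d/dt M(t) = 0`, and the
total energy `E(t) = Σ_e ∫_0^{ℓ_e} ( m²/(2ρ) + P(ρ) ) dx` is differentiable with
`d/dt E(t) + D(t) = 0`, where
`D(t) = Σ_e ∫_0^{ℓ_e} ( a_e |∂ₓ m|²/ρ² + b_e |m|³/ρ² ) dx` is the dissipation. -/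
theorem balance_of_mass_and_energy
    {V E : Type} [Fintype V] [Fintype E] [DecidableEq V]
    (src dst : E → V) (ℓ : E → ℝ) (hℓ : ∀ e, 0 < ℓ e)
    (γ : ℝ) (hγ : 1 < γ) (a b c : E → ℝ)
    (ha : ∀ e, 0 ≤ a e) (hb : ∀ e, 0 ≤ b e) (hc : ∀ e, 0 < c e)
    (T : ℝ) (hT : 0 ≤ T)
    (ρ m ρt ρx mt mx mxx : E → ℝ → ℝ → ℝ)
    (hsol : SmoothSolution src dst ℓ γ a b c T ρ m ρt ρx mt mx mxx)
    (t : ℝ) (ht : t ∈ Set.Icc 0 T) :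
    HasDerivWithinAt (fun s => ∑ e, ∫ x in (0 : ℝ)..(ℓ e), ρ e s x)
      0 (Set.Icc 0 T) t ∧
    HasDerivWithinAt (fun s => ∑ e, ∫ x in (0 : ℝ)..(ℓ e),
        (m e s x ^ 2 / (2 * ρ e s x) + c e * ρ e s x ^ γ / (γ - 1)))
      (-(∑ e, ∫ x in (0 : ℝ)..(ℓ e),
          (a e * mx e t x ^ 2 / ρ e t x ^ 2 + b e * |m e t x| ^ 3 / ρ e t x ^ 2)))
      (Set.Icc 0 T) t := by
  obtain ⟨⟨ρlow, hρlow, hpos⟩, hder, hρc, hmc, hρtc, hρxc, hmtc, hmxc, hmxxc, hmass, hmom,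
    hcoup, hbdry⟩ := hsol
  have hγ1 : γ - 1 ≠ 0 := by linarith
  -- time derivative of the mass on each edge
  have massd : ∀ e, HasDerivWithinAt (fun s => ∫ x in (0:ℝ)..(ℓ e), ρ e s x)
      (∫ x in (0:ℝ)..(ℓ e), ρt e t x) (Set.Icc 0 T) t := fun e =>
    PipeAux.param_hasDerivWithinAt (hℓ e).le
      (fun t' ht' x hx => (hder e t' ht' x hx).1)
      (fun s hs => PipeAux.slice_t (hρc e) hs) (hρtc e) ht
  have ival : ∀ e, (∫ x in (0:ℝ)..(ℓ e), ρt e t x) = -(m e t (ℓ e) - m e t 0) := by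
    intro e
    have h1 : (∫ x in (0:ℝ)..(ℓ e), ρt e t x) = ∫ x in (0:ℝ)..(ℓ e), -(mx e t x) :=
      intervalIntegral.integral_congr fun x hx => by
        have := hmass e t ht x (by rwa [Set.uIcc_of_le (hℓ e).le] at hx); linarith
    have h2 : (∫ x in (0:ℝ)..(ℓ e), mx e t x) = m e t (ℓ e) - m e t 0 :=
      intervalIntegral.integral_eq_sub_of_hasDerivAt
        (fun x hx => (hder e t ht x (by rwa [Set.uIcc_of_le (hℓ e).le] at hx)).2.2.2.1)
        (ContinuousOn.intervalIntegrable
          (by rw [Set.uIcc_of_le (hℓ e).le]; exact PipeAux.slice_t (hmxc e) ht))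
    rw [h1, intervalIntegral.integral_neg, h2]
  have flux0 : ∑ e, (m e t (ℓ e) - m e t 0) = 0 := by
    rw [PipeAux.sum_sub_eq_sum_vertices src dst]
    refine Finset.sum_eq_zero fun w _ => ?_
    by_cases hw : 2 ≤ (Finset.univ.filter fun e : E => src e = w ∨ dst e = w).card
    · exact (hcoup w hw t ht).1
    · refine Finset.sum_eq_zero fun e _ => ?_
      have hbd := hbdry w (lt_of_not_ge hw) t ht e
      have e1 : (if dst e = w then m e t (ℓ e) else 0) = 0 := by
        split_ifs with h; exacts [hbd.2 h, rfl]
      have e2 : (if src e = w then m e t 0 else 0) = 0 := by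
        split_ifs with h; exacts [hbd.1 h, rfl]
      rw [e1, e2, sub_zero]
  constructor
  · -- mass balance
    have h0 : ∑ e, (∫ x in (0:ℝ)..(ℓ e), ρt e t x) = 0 := by
      simp only [ival, Finset.sum_neg_distrib, flux0, neg_zero]
    have := HasDerivWithinAt.fun_sum (u := Finset.univ)
      (A := fun e => fun s => ∫ x in (0:ℝ)..(ℓ e), ρ e s x)
      (A' := fun e => ∫ x in (0:ℝ)..(ℓ e), ρt e t x) (fun e _ => massd e)
    rwa [h0] at this
  · -- energy balance
    -- continuity on the rectangle of the time derivative of the energy density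
    have hEtc : ∀ e, ContinuousOn (fun q : ℝ × ℝ =>
        m e q.1 q.2 * mt e q.1 q.2 / ρ e q.1 q.2
          - m e q.1 q.2 ^ 2 * ρt e q.1 q.2 / (2 * ρ e q.1 q.2 ^ 2)
          + c e * γ / (γ - 1) * ρ e q.1 q.2 ^ (γ - 1) * ρt e q.1 q.2)
        (Set.Icc 0 T ×ˢ Set.Icc 0 (ℓ e)) := by
      intro e
      have hne : ∀ q ∈ Set.Icc (0:ℝ) T ×ˢ Set.Icc (0:ℝ) (ℓ e), ρ e q.1 q.2 ≠ 0 :=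
        fun q hq => (lt_of_lt_of_le hρlow (hpos e q.1 hq.1 q.2 hq.2)).ne'
      refine ContinuousOn.add (ContinuousOn.sub ?_ ?_) ?_
      · exact (ContinuousOn.mul (hmc e) (hmtc e)).div (hρc e) hne
      · exact (ContinuousOn.mul ((hmc e).pow 2) (hρtc e)).div
          (continuousOn_const.mul ((hρc e).pow 2))
          (fun q hq => mul_ne_zero two_ne_zero (pow_ne_zero 2 (hne q hq)))
      · exact ContinuousOn.mul
          (continuousOn_const.mul ((hρc e).rpow_const (p := γ - 1) (fun q hq => Or.inl (hne q hq))))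
          (hρtc e)
    -- time derivative of the energy on each edge
    have ED : ∀ e, HasDerivWithinAt
        (fun s => ∫ x in (0:ℝ)..(ℓ e),
          (m e s x ^ 2 / (2 * ρ e s x) + c e * ρ e s x ^ γ / (γ - 1)))
        (∫ x in (0:ℝ)..(ℓ e), (m e t x * mt e t x / ρ e t x
          - m e t x ^ 2 * ρt e t x / (2 * ρ e t x ^ 2)
          + c e * γ / (γ - 1) * ρ e t x ^ (γ - 1) * ρt e t x)) (Set.Icc 0 T) t := by
      intro e
      refine PipeAux.param_hasDerivWithinAt (hℓ e).le
        (ft := fun s x => m e s x * mt e s x / ρ e s x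
          - m e s x ^ 2 * ρt e s x / (2 * ρ e s x ^ 2)
          + c e * γ / (γ - 1) * ρ e s x ^ (γ - 1) * ρt e s x) ?_ ?_ (hEtc e) ht
      · intro t' ht' x hx
        obtain ⟨hρ, -, hm, -, -⟩ := hder e t' ht' x hx
        have hρpos : 0 < ρ e t' x := lt_of_lt_of_le hρlow (hpos e t' ht' x hx)
        have h1 := (hm.pow 2).div (hρ.const_mul 2)
          (mul_ne_zero two_ne_zero hρpos.ne')
        have h2 := ((hρ.rpow_const (p := γ) (Or.inl hρpos.ne')).const_mul (c e)).div_const (γ - 1)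
        refine (h1.add h2).congr_deriv ?_
        simp only [Pi.pow_apply, Pi.div_apply, Pi.add_apply, Pi.sub_apply, Pi.mul_apply]
        field_simp
        ring
      · intro s hs
        have hρs := PipeAux.slice_t (hρc e) hs
        have hms := PipeAux.slice_t (hmc e) hs
        have hne : ∀ x ∈ Set.Icc (0:ℝ) (ℓ e), ρ e s x ≠ 0 := fun x hx =>
          (lt_of_lt_of_le hρlow (hpos e s hs x hx)).ne'
        exact ContinuousOn.add
          (((hms.pow 2).div (continuousOn_const.mul hρs)
            (fun x hx => mul_ne_zero two_ne_zero (hne x hx))))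
          ((continuousOn_const.mul
            (hρs.rpow_const (p := γ) (fun x hx => Or.inl (hne x hx)))).div_const (γ - 1))
    -- spatial integral of the time derivative: flux + dissipation
    have hflux : ∀ e, (∫ x in (0:ℝ)..(ℓ e), (m e t x * mt e t x / ρ e t x
          - m e t x ^ 2 * ρt e t x / (2 * ρ e t x ^ 2)
          + c e * γ / (γ - 1) * ρ e t x ^ (γ - 1) * ρt e t x))
        = -((m e t (ℓ e) * (m e t (ℓ e) ^ 2 / (2 * ρ e t (ℓ e) ^ 2)
              + c e * γ / (γ - 1) * ρ e t (ℓ e) ^ (γ - 1)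
              - a e / ρ e t (ℓ e) ^ 2 * mx e t (ℓ e)))
            - (m e t 0 * (m e t 0 ^ 2 / (2 * ρ e t 0 ^ 2)
              + c e * γ / (γ - 1) * ρ e t 0 ^ (γ - 1) - a e / ρ e t 0 ^ 2 * mx e t 0)))
          - ∫ x in (0:ℝ)..(ℓ e), (a e * mx e t x ^ 2 / ρ e t x ^ 2
              + b e * |m e t x| ^ 3 / ρ e t x ^ 2) := by
      intro e
      have hΦd : ∀ x ∈ Set.Icc (0:ℝ) (ℓ e), HasDerivAt
          (fun y => m e t y * (m e t y ^ 2 / (2 * ρ e t y ^ 2)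
            + c e * γ / (γ - 1) * ρ e t y ^ (γ - 1) - a e / ρ e t y ^ 2 * mx e t y))
          (-((m e t x * mt e t x / ρ e t x - m e t x ^ 2 * ρt e t x / (2 * ρ e t x ^ 2)
              + c e * γ / (γ - 1) * ρ e t x ^ (γ - 1) * ρt e t x)
            + (a e * mx e t x ^ 2 / ρ e t x ^ 2 + b e * |m e t x| ^ 3 / ρ e t x ^ 2))) x := by
        intro x hx
        obtain ⟨F, G, hF, hG, hmome⟩ := hmom e t ht x hx
        obtain ⟨hρt, hρx, hmt, hmx, hmxx⟩ := hder e t ht x hx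
        have hρpos : 0 < ρ e t x := lt_of_lt_of_le hρlow (hpos e t ht x hx)
        have hρne : ρ e t x ≠ 0 := hρpos.ne'
        have hF0 : HasDerivAt (fun y => m e t y ^ 2 / ρ e t y + c e * ρ e t y ^ γ)
            (((2:ℕ) * m e t x ^ 1 * mx e t x * ρ e t x - m e t x ^ 2 * ρx e t x) / ρ e t x ^ 2
              + c e * (ρx e t x * γ * ρ e t x ^ (γ - 1))) x :=
          ((hmx.pow 2).div hρx hρne).add ((hρx.rpow_const (Or.inl hρne)).const_mul (c e))
        have hFeq := hF.unique hF0
        have hraw := hmx.mul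
          ((((hmx.pow 2).div ((hρx.pow 2).const_mul 2)
              (mul_ne_zero two_ne_zero (pow_ne_zero 2 hρne))).add
            ((hρx.rpow_const (p := γ - 1) (Or.inl hρne)).const_mul (c e * γ / (γ - 1)))).sub
            (hG.const_mul (a e)))
        have hfun : (fun y => m e t y * (m e t y ^ 2 / (2 * ρ e t y ^ 2)
            + c e * γ / (γ - 1) * ρ e t y ^ (γ - 1) - a e / ρ e t y ^ 2 * mx e t y))
            = (fun y => m e t y * (m e t y ^ 2 / (2 * ρ e t y ^ 2)
              + c e * γ / (γ - 1) * ρ e t y ^ (γ - 1) - a e * (mx e t y / ρ e t y ^ 2))) := by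
          funext y; ring
        rw [hfun]
        refine hraw.congr_deriv ?_
        have hmt' : mt e t x
            = - F + a e * ρ e t x * G - b e * |m e t x| * m e t x / ρ e t x := by
          linarith [hmome]
        have hρt' : ρt e t x = - mx e t x := by
          have := hmass e t ht x hx; linarith
        have e1 : ρ e t x ^ (γ - 1) = ρ e t x ^ γ / ρ e t x := by
          rw [Real.rpow_sub hρpos, Real.rpow_one]
        have e2 : ρ e t x ^ (γ - 1 - 1) = ρ e t x ^ γ / ρ e t x / ρ e t x := by
          rw [Real.rpow_sub hρpos, Real.rpow_one, e1]
        have habs : |m e t x| ^ 3 = m e t x ^ 2 * |m e t x| := by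
          rw [pow_succ, sq_abs]
        rw [hmt', hFeq, hρt', habs, e1, e2]
        have hγpos : (0:ℝ) < γ - 1 := by linarith
        simp only [Pi.pow_apply, Pi.div_apply, Pi.add_apply, Pi.sub_apply, Pi.mul_apply, e1]
        field_simp
        ring
      have hcρ := PipeAux.slice_t (hρc e) ht
      have hcm := PipeAux.slice_t (hmc e) ht
      have hcmx := PipeAux.slice_t (hmxc e) ht
      have hne : ∀ x ∈ Set.Icc (0:ℝ) (ℓ e), ρ e t x ^ 2 ≠ 0 := fun x hx =>
        pow_ne_zero 2 (lt_of_lt_of_le hρlow (hpos e t ht x hx)).ne'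
      have hcd : ContinuousOn (fun x => a e * mx e t x ^ 2 / ρ e t x ^ 2
          + b e * |m e t x| ^ 3 / ρ e t x ^ 2) (Set.Icc 0 (ℓ e)) :=
        ContinuousOn.add
          ((continuousOn_const.mul (hcmx.pow 2)).div (hcρ.pow 2) hne)
          ((continuousOn_const.mul ((hcm.abs).pow 3)).div (hcρ.pow 2) hne)
      have hcE : ContinuousOn (fun x => m e t x * mt e t x / ρ e t x
          - m e t x ^ 2 * ρt e t x / (2 * ρ e t x ^ 2)
          + c e * γ / (γ - 1) * ρ e t x ^ (γ - 1) * ρt e t x) (Set.Icc 0 (ℓ e)) :=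
        PipeAux.slice_t (f := fun s x => m e s x * mt e s x / ρ e s x
          - m e s x ^ 2 * ρt e s x / (2 * ρ e s x ^ 2)
          + c e * γ / (γ - 1) * ρ e s x ^ (γ - 1) * ρt e s x) (hEtc e) ht
      have hiE : IntervalIntegrable (fun x => m e t x * mt e t x / ρ e t x
          - m e t x ^ 2 * ρt e t x / (2 * ρ e t x ^ 2)
          + c e * γ / (γ - 1) * ρ e t x ^ (γ - 1) * ρt e t x) volume 0 (ℓ e) :=
        ContinuousOn.intervalIntegrable (by rw [Set.uIcc_of_le (hℓ e).le]; exact hcE)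
      have hid : IntervalIntegrable (fun x => a e * mx e t x ^ 2 / ρ e t x ^ 2
          + b e * |m e t x| ^ 3 / ρ e t x ^ 2) volume 0 (ℓ e) :=
        ContinuousOn.intervalIntegrable (by rw [Set.uIcc_of_le (hℓ e).le]; exact hcd)
      have key := intervalIntegral.integral_eq_sub_of_hasDerivAt
        (fun x hx => hΦd x (by rwa [Set.uIcc_of_le (hℓ e).le] at hx))
        (by exact (hiE.add hid).neg)
      rw [intervalIntegral.integral_neg, intervalIntegral.integral_add hiE hid] at key
      linarith [key]
    -- the total flux through the vertices vanishes
    have hΦsum : ∑ e, (m e t (ℓ e) * (m e t (ℓ e) ^ 2 / (2 * ρ e t (ℓ e) ^ 2)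
          + c e * γ / (γ - 1) * ρ e t (ℓ e) ^ (γ - 1)
          - a e / ρ e t (ℓ e) ^ 2 * mx e t (ℓ e))
        - m e t 0 * (m e t 0 ^ 2 / (2 * ρ e t 0 ^ 2)
          + c e * γ / (γ - 1) * ρ e t 0 ^ (γ - 1) - a e / ρ e t 0 ^ 2 * mx e t 0)) = 0 := by
      rw [PipeAux.sum_sub_eq_sum_vertices src dst]
      refine Finset.sum_eq_zero fun w _ => ?_
      by_cases hw : 2 ≤ (Finset.univ.filter fun e : E => src e = w ∨ dst e = w).card
      · obtain ⟨hm0, h, hh⟩ := hcoup w hw t ht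
        have step : ∀ e : E,
            (if dst e = w then m e t (ℓ e) * (m e t (ℓ e) ^ 2 / (2 * ρ e t (ℓ e) ^ 2)
                + c e * γ / (γ - 1) * ρ e t (ℓ e) ^ (γ - 1)
                - a e / ρ e t (ℓ e) ^ 2 * mx e t (ℓ e)) else 0)
              - (if src e = w then m e t 0 * (m e t 0 ^ 2 / (2 * ρ e t 0 ^ 2)
                + c e * γ / (γ - 1) * ρ e t 0 ^ (γ - 1)
                - a e / ρ e t 0 ^ 2 * mx e t 0) else 0)
            = h * ((if dst e = w then m e t (ℓ e) else 0)
                - (if src e = w then m e t 0 else 0)) := by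
          intro e
          have d1 : (if dst e = w then m e t (ℓ e) * (m e t (ℓ e) ^ 2 / (2 * ρ e t (ℓ e) ^ 2)
                + c e * γ / (γ - 1) * ρ e t (ℓ e) ^ (γ - 1)
                - a e / ρ e t (ℓ e) ^ 2 * mx e t (ℓ e)) else 0)
              = h * (if dst e = w then m e t (ℓ e) else 0) := by
            split_ifs with hcase
            · rw [(hh e).2 hcase]; ring
            · ring
          have d2 : (if src e = w then m e t 0 * (m e t 0 ^ 2 / (2 * ρ e t 0 ^ 2)
                + c e * γ / (γ - 1) * ρ e t 0 ^ (γ - 1)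
                - a e / ρ e t 0 ^ 2 * mx e t 0) else 0)
              = h * (if src e = w then m e t 0 else 0) := by
            split_ifs with hcase
            · rw [(hh e).1 hcase]; ring
            · ring
          rw [d1, d2]; ring
        rw [Finset.sum_congr rfl (fun e _ => step e), ← Finset.mul_sum, hm0, mul_zero]
      · refine Finset.sum_eq_zero fun e _ => ?_
        have hbd := hbdry w (lt_of_not_ge hw) t ht e
        have d1 : (if dst e = w then m e t (ℓ e) * (m e t (ℓ e) ^ 2 / (2 * ρ e t (ℓ e) ^ 2)
              + c e * γ / (γ - 1) * ρ e t (ℓ e) ^ (γ - 1)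
              - a e / ρ e t (ℓ e) ^ 2 * mx e t (ℓ e)) else 0) = 0 := by
          split_ifs with hcase
          · rw [hbd.2 hcase]; ring
          · rfl
        have d2 : (if src e = w then m e t 0 * (m e t 0 ^ 2 / (2 * ρ e t 0 ^ 2)
              + c e * γ / (γ - 1) * ρ e t 0 ^ (γ - 1)
              - a e / ρ e t 0 ^ 2 * mx e t 0) else 0) = 0 := by
          split_ifs with hcase
          · rw [hbd.1 hcase]; ring
          · rfl
        rw [d1, d2, sub_zero]
    -- assemble
    have hval : ∑ e, (∫ x in (0:ℝ)..(ℓ e), (m e t x * mt e t x / ρ e t x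
          - m e t x ^ 2 * ρt e t x / (2 * ρ e t x ^ 2)
          + c e * γ / (γ - 1) * ρ e t x ^ (γ - 1) * ρt e t x))
        = -(∑ e, ∫ x in (0:ℝ)..(ℓ e), (a e * mx e t x ^ 2 / ρ e t x ^ 2
            + b e * |m e t x| ^ 3 / ρ e t x ^ 2)) := by
      rw [Finset.sum_congr rfl (fun e _ => hflux e), Finset.sum_sub_distrib,
        Finset.sum_neg_distrib, hΦsum, neg_zero, zero_sub]
    have := HasDerivWithinAt.fun_sum (u := Finset.univ)
      (A := fun e => fun s => ∫ x in (0:ℝ)..(ℓ e),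
        (m e s x ^ 2 / (2 * ρ e s x) + c e * ρ e s x ^ γ / (γ - 1)))
      (A' := fun e => ∫ x in (0:ℝ)..(ℓ e), (m e t x * mt e t x / ρ e t x
        - m e t x ^ 2 * ρt e t x / (2 * ρ e t x ^ 2)
        + c e * γ / (γ - 1) * ρ e t x ^ (γ - 1) * ρt e t x)) (fun e _ => ED e)
    rwa [hval] at this
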